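/- Let X, Y be topological spaces and φ : X → Y a continuous map such that φ(X) is dense in Y and φ maps every nonmeager subset of X to a nonmeager subset of Y, and suppose images of Borel sets under φ are Baire measurable (almost open). Then the preimage under φ of every nonmeager subset of Y is nonmeager in X. -/

import Mathlib

open Set Filter Topology TopologicalSpace

/-- In a Baire space, a nonempty open set is nonmeager. -/
lemma aux_isOpen_not_isMeagre {Z : Type*} [TopologicalSpace Z] [BaireSpace Z]
    {U : Set Z} (hU : IsOpen U) (hne : U.Nonempty) : ¬ IsMeagre U := by
  intro h
  have hd : Dense Uᶜ := dense_of_mem_residual h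
  obtain ⟨x, hx⟩ := hne
  obtain ⟨y, hy⟩ := hd.inter_open_nonempty U hU ⟨x, hx⟩
  exact hy.2 hy.1

lemma aux_isMeagre_union {Z : Type*} [TopologicalSpace Z] {s t : Set Z}
    (hs : IsMeagre s) (ht : IsMeagre t) : IsMeagre (s ∪ t) := by
  rw [IsMeagre, Set.compl_union]
  exact Filter.inter_mem hs ht

lemma aux_isNowhereDense_isMeagre {Z : Type*} [TopologicalSpace Z] {s : Set Z}
    (hs : IsNowhereDense s) : IsMeagre s := by
  rw [isMeagre_iff_countable_union_isNowhereDense]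
  exact ⟨{s}, by simpa using hs, Set.countable_singleton s, by simp⟩

lemma aux_eventuallyEq_diff_meagre {Z : Type*} [TopologicalSpace Z]
    {s u : Set Z} (h : s =ᵇ u) : IsMeagre (u \ s) ∧ IsMeagre (s \ u) := by
  rw [Filter.eventuallyEq_set] at h
  constructor
  · rw [IsMeagre]
    refine Filter.mem_of_superset h ?_
    intro x hx hxd
    exact hxd.2 (hx.mpr hxd.1)
  · rw [IsMeagre]
    refine Filter.mem_of_superset h ?_
    intro x hx hxd
    exact hxd.2 (hx.mp hxd.1)

theorem preimage_nonmeager_of_image_nonmeager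
    (X Y : Type*) [TopologicalSpace X] [TopologicalSpace Y]
    [PolishSpace X] [PolishSpace Y] [MeasurableSpace X] [BorelSpace X]
    (φ : X → Y) (hc : Continuous φ) (hd : DenseRange φ)
    (himg : ∀ A : Set X, ¬ IsMeagre A → ¬ IsMeagre (φ '' A))
    (hBaire : ∀ B : Set X, MeasurableSet B → BaireMeasurableSet (φ '' B)) :
    ∀ C : Set Y, ¬ IsMeagre C → ¬ IsMeagre (φ ⁻¹' C) := by
  letI := upgradeIsCompletelyMetrizable X
  letI := upgradeIsCompletelyMetrizable Y
  intro C hC hpre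
  -- extract a dense Gδ set `t` disjoint from `φ ⁻¹' C`
  obtain ⟨t, hts, htGδ, htd⟩ := mem_residual.1 (hpre : (φ ⁻¹' C)ᶜ ∈ residual X)
  -- the union of basic open sets on which C is meager
  set B := countableBasis Y with hB
  set S : Set (Set Y) := {V ∈ B | IsMeagre (C ∩ V)} with hS
  set W : Set Y := ⋃₀ S with hW
  have hWopen : IsOpen W := isOpen_sUnion fun V hV =>
    (isBasis_countableBasis Y).isOpen hV.1
  have hCW : IsMeagre (C ∩ W) := by
    have hScount : S.Countable := (countable_countableBasis Y).mono fun V hV => hV.1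
    have h1 : IsMeagre (⋃ V ∈ S, C ∩ V) := by
      rw [IsMeagre, Set.compl_iUnion₂]
      exact (countable_bInter_mem hScount).2 fun V hV => hV.2
    refine h1.mono ?_
    rintro y ⟨hyC, V, hV, hyV⟩
    exact Set.mem_biUnion hV ⟨hyC, hyV⟩
  -- C is nonmeager somewhere off the closure of W
  set Vc : Set Y := (closure W)ᶜ with hVc
  have hVcopen : IsOpen Vc := isClosed_closure.isOpen_compl
  have hCVc : ¬ IsMeagre (C ∩ Vc) := by
    intro h
    apply hC
    have hbd : IsMeagre (closure W \ W) := by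
      have hclosed : IsClosed (closure W \ W) := by
        rw [Set.diff_eq]
        exact isClosed_closure.inter hWopen.isClosed_compl
      have hint : interior (closure W \ W) = ∅ := by
        by_contra hcon
        obtain ⟨x, hx⟩ := Set.nonempty_iff_ne_empty.2 hcon
        have hxc : x ∈ closure W := (interior_subset hx).1
        obtain ⟨y, hy⟩ := mem_closure_iff.1 hxc _ isOpen_interior hx
        exact (interior_subset hy.1).2 hy.2
      exact aux_isNowhereDense_isMeagre (hclosed.isNowhereDense_iff.2 hint)
    have : C ⊆ (C ∩ W) ∪ (C ∩ Vc) ∪ (closure W \ W) := by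
      intro y hy
      by_cases h1 : y ∈ W
      · exact Or.inl (Or.inl ⟨hy, h1⟩)
      · by_cases h2 : y ∈ closure W
        · exact Or.inr ⟨h2, h1⟩
        · exact Or.inl (Or.inr ⟨hy, h2⟩)
    exact (aux_isMeagre_union (aux_isMeagre_union hCW h) hbd).mono this
  -- key property: C is nonmeager on every nonempty open subset of Vc
  have hkey : ∀ U : Set Y, IsOpen U → U.Nonempty → U ⊆ Vc → ¬ IsMeagre (C ∩ U) := by
    intro U hUopen ⟨y, hy⟩ hUVc hmeag
    obtain ⟨V, hVB, hyV, hVU⟩ := (isBasis_countableBasis Y).exists_subset_of_mem_open hy hUopen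
    have hVS : V ∈ S := ⟨hVB, hmeag.mono fun z (hz : z ∈ C ∩ V) => (⟨hz.1, hVU hz.2⟩ : z ∈ C ∩ U)⟩
    have : y ∈ W := ⟨V, hVS, hyV⟩
    exact hUVc hy (subset_closure this)
  -- Vc is nonempty
  have hVcne : Vc.Nonempty := by
    rcases Set.eq_empty_or_nonempty Vc with h | h
    · exact absurd (by simpa [h] using IsMeagre.empty) hCVc
    · exact h
  -- the set A = φ⁻¹(Vc) ∩ t is nonmeager Borel
  set A : Set X := φ ⁻¹' Vc ∩ t with hA
  have hAmeas : MeasurableSet A :=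
    ((hVcopen.preimage hc).measurableSet).inter htGδ.measurableSet
  have hAnm : ¬ IsMeagre A := by
    intro h
    have hpne : (φ ⁻¹' Vc).Nonempty := by
      obtain ⟨y, hy⟩ := hd.inter_open_nonempty Vc hVcopen hVcne
      obtain ⟨x, rfl⟩ := hy.2
      exact ⟨x, hy.1⟩
    have htres : t ∈ residual X := residual_of_dense_Gδ htGδ htd
    have : IsMeagre (φ ⁻¹' Vc) := by
      have hsub : φ ⁻¹' Vc ⊆ A ∪ tᶜ := by
        intro x hx
        by_cases hxt : x ∈ t
        · exact Or.inl ⟨hx, hxt⟩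
        · exact Or.inr hxt
      exact (aux_isMeagre_union h (by rwa [IsMeagre, compl_compl])).mono hsub
    exact aux_isOpen_not_isMeagre (hVcopen.preimage hc) hpne this
  -- φ(A) is nonmeager and Baire measurable, so comeager in some open set u
  have hφA : ¬ IsMeagre (φ '' A) := himg A hAnm
  obtain ⟨u, huopen, hueq⟩ := (hBaire A hAmeas).residualEq_isOpen
  obtain ⟨hud, hdu⟩ := aux_eventuallyEq_diff_meagre hueq
  -- φ(A) ∩ u is nonempty
  have hiu : (φ '' A ∩ u).Nonempty := by
    rcases Set.eq_empty_or_nonempty (φ '' A ∩ u) with h | h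
    · exfalso
      apply hφA
      refine hdu.mono fun y (hy : y ∈ φ '' A) => (⟨hy, fun hyu => ?_⟩ : y ∈ φ '' A \ u)
      exact Set.eq_empty_iff_forall_notMem.1 h y ⟨hy, hyu⟩
    · exact h
  -- consider U = u ∩ Vc : nonempty open subset of Vc
  have hφAVc : φ '' A ⊆ Vc := by
    rintro y ⟨x, hx, rfl⟩
    exact hx.1
  have hUne : (u ∩ Vc).Nonempty := by
    obtain ⟨y, hy⟩ := hiu
    exact ⟨y, hy.2, hφAVc hy.1⟩
  -- C is disjoint from φ(A)
  have hdisj : C ∩ φ '' A = ∅ := by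
    rw [Set.eq_empty_iff_forall_notMem]
    rintro y ⟨hyC, x, hxA, rfl⟩
    exact hts hxA.2 hyC
  -- so C ∩ (u ∩ Vc) ⊆ u \ φ(A) is meager, contradiction
  apply hkey (u ∩ Vc) (huopen.inter hVcopen) hUne (Set.inter_subset_right)
  refine hud.mono ?_
  rintro y ⟨hyC, hyu, _⟩
  refine ⟨hyu, fun hyφA => ?_⟩
  exact Set.eq_empty_iff_forall_notMem.1 hdisj y ⟨hyC, hyφA⟩
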